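/- Every non-normal 2×2 complex matrix has normal defect one: it can be completed to a normal 3×3 matrix. -/

import Mathlib

open Matrix Complex

noncomputable def B0 (p b q : ℂ) : Matrix (Fin 3) (Fin 3) ℂ :=
  ![![p, b, 0],
    ![0, q, (Real.sqrt (normSq b + normSq (q - p)) : ℂ)],
    ![(starRingEnd ℂ) b, (starRingEnd ℂ) q - (starRingEnd ℂ) p, q]]

lemma B0_normal (p b q : ℂ) : (B0 p b q)ᴴ * (B0 p b q) = (B0 p b q) * (B0 p b q)ᴴ := by
  have hnn : (0:ℝ) ≤ normSq b + normSq (q - p) :=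
    add_nonneg (normSq_nonneg _) (normSq_nonneg _)
  have hs : (Real.sqrt (normSq b + normSq (q - p)) : ℂ) *
      (Real.sqrt (normSq b + normSq (q - p)) : ℂ)
      = b * (starRingEnd ℂ) b + q * (starRingEnd ℂ) q - q * (starRingEnd ℂ) p
        - p * (starRingEnd ℂ) q + p * (starRingEnd ℂ) p := by
    rw [← Complex.ofReal_mul, Real.mul_self_sqrt hnn, Complex.ofReal_add,
      ← Complex.mul_conj, ← Complex.mul_conj, map_sub]
    ring
  ext i j
  fin_cases i <;> fin_cases j <;> simp only [Matrix.mul_apply, conjTranspose_apply] <;>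
    simp [B0, Matrix.mul_apply, Fin.sum_univ_three, conjTranspose_apply, Complex.conj_ofReal,
      map_sub] <;>
    first
      | ring1
      | linear_combination hs
      | linear_combination -hs

lemma exists_eigen (a b c e : ℂ) : ∃ μ u1 u2 : ℂ, ¬ (u1 = 0 ∧ u2 = 0) ∧
    a * u1 + b * u2 = μ * u1 ∧ c * u1 + e * u2 = μ * u2 := by
  obtain ⟨z, hz⟩ := IsAlgClosed.exists_pow_nat_eq ((a - e) ^ 2 + 4 * b * c) (by norm_num : 0 < 2)
  set μ : ℂ := (a + e + z) / 2 with hμ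
  have hchar : μ * μ - (a + e) * μ + (a * e - b * c) = 0 := by
    rw [hμ]
    field_simp
    linear_combination hz
  by_cases h : b = 0 ∧ a = μ
  · by_cases h2 : μ - e = 0 ∧ c = 0
    · exact ⟨μ, 1, 0, by simp, by simp [h.1, h.2], by simp [h2.2]⟩
    · refine ⟨μ, μ - e, c, h2, ?_, ?_⟩
      · rw [h.1, h.2]; ring
      · ring
  · refine ⟨μ, b, μ - a, ?_, by ring, ?_⟩
    · rintro ⟨hb0, hma⟩
      exact h ⟨hb0, (sub_eq_zero.mp hma).symm⟩
    · linear_combination -hchar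

theorem stmt10 (A : Matrix (Fin 2) (Fin 2) ℂ) (hA : ¬ Aᴴ * A = A * Aᴴ) :
    ∃ B : Matrix (Fin 3) (Fin 3) ℂ, Bᴴ * B = B * Bᴴ ∧
      ∀ i j : Fin 2, B (Fin.castLE (by norm_num) i) (Fin.castLE (by norm_num) j) = A i j := by
  obtain ⟨μ, u1, u2, hu, h1, h2⟩ := exists_eigen (A 0 0) (A 0 1) (A 1 0) (A 1 1)
  have hpos : 0 < normSq u1 + normSq u2 := by
    have hor : u1 ≠ 0 ∨ u2 ≠ 0 := by tauto
    rcases hor with h | h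
    · have := normSq_pos.mpr h
      linarith [normSq_nonneg u2]
    · have := normSq_pos.mpr h
      linarith [normSq_nonneg u1]
  set n : ℂ := ((Real.sqrt (normSq u1 + normSq u2) : ℝ) : ℂ) with hn
  have hnne : n ≠ 0 := by
    rw [hn]
    exact_mod_cast (Real.sqrt_pos.mpr hpos).ne'
  have hcn : (starRingEnd ℂ) n = n := Complex.conj_ofReal _
  have hnn : n * n = (normSq u1 : ℂ) + (normSq u2 : ℂ) := by
    rw [hn, ← Complex.ofReal_mul, Real.mul_self_sqrt hpos.le, Complex.ofReal_add]
  set v1 : ℂ := u1 / n with hv1d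
  set v2 : ℂ := u2 / n with hv2d
  have hnorm : (starRingEnd ℂ) v1 * v1 + (starRingEnd ℂ) v2 * v2 = 1 := by
    rw [hv1d, hv2d, map_div₀, map_div₀, hcn]
    field_simp
    rw [← Complex.normSq_eq_conj_mul_self, ← Complex.normSq_eq_conj_mul_self]
    linear_combination -hnn
  have hv1 : A 0 0 * v1 + A 0 1 * v2 = μ * v1 := by
    rw [hv1d, hv2d]
    field_simp
    linear_combination h1
  have hv2 : A 1 0 * v1 + A 1 1 * v2 = μ * v2 := by
    rw [hv1d, hv2d]
    field_simp
    linear_combination h2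
  set U : Matrix (Fin 2) (Fin 2) ℂ :=
    ![![v1, -(starRingEnd ℂ) v2], ![v2, (starRingEnd ℂ) v1]] with hUdef
  have hUU : U * Uᴴ = 1 := by
    ext i j
    fin_cases i <;> fin_cases j <;> simp only [Matrix.mul_apply, conjTranspose_apply] <;>
      simp [hUdef, Matrix.mul_apply, Fin.sum_univ_two, conjTranspose_apply, Matrix.one_apply] <;>
      first
        | ring1
        | linear_combination hnorm
  set T : Matrix (Fin 2) (Fin 2) ℂ := Uᴴ * A * U with hTdef
  have hT10 : T 1 0 = 0 := by
    have : T 1 0 = -v2 * (A 0 0 * v1 + A 0 1 * v2) + v1 * (A 1 0 * v1 + A 1 1 * v2) := by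
      simp only [hTdef, Matrix.mul_apply, conjTranspose_apply]
      simp [hTdef, hUdef, Matrix.mul_apply, Fin.sum_univ_two, conjTranspose_apply]
      ring
    rw [this, hv1, hv2]
    ring
  set V : Matrix (Fin 3) (Fin 3) ℂ :=
    ![![v1, -(starRingEnd ℂ) v2, 0], ![v2, (starRingEnd ℂ) v1, 0], ![0, 0, 1]] with hVdef
  have hVV : V * Vᴴ = 1 := by
    ext i j
    fin_cases i <;> fin_cases j <;> simp only [Matrix.mul_apply, conjTranspose_apply] <;>
      simp [hVdef, Matrix.mul_apply, Fin.sum_univ_three, conjTranspose_apply, Matrix.one_apply] <;>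
      first
        | ring1
        | linear_combination hnorm
  have hV'V : Vᴴ * V = 1 := mul_eq_one_comm.mp hVV
  have hconj : ∀ X Y : Matrix (Fin 3) (Fin 3) ℂ,
      (V * X * Vᴴ) * (V * Y * Vᴴ) = V * (X * Y) * Vᴴ := by
    intro X Y
    simp only [Matrix.mul_assoc]
    rw [show Vᴴ * (V * (Y * Vᴴ)) = Y * Vᴴ by
      rw [← Matrix.mul_assoc, hV'V, Matrix.one_mul]]
  refine ⟨V * B0 (T 0 0) (T 0 1) (T 1 1) * Vᴴ, ?_, ?_⟩
  · have e1 : (V * B0 (T 0 0) (T 0 1) (T 1 1) * Vᴴ)ᴴ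
        = V * (B0 (T 0 0) (T 0 1) (T 1 1))ᴴ * Vᴴ := by
      simp [Matrix.conjTranspose_mul, Matrix.mul_assoc]
    rw [e1, hconj, hconj, B0_normal]
  · intro i j
    have hUU' : U * Uᴴ = 1 := hUU
    have hA2 : U * T * Uᴴ = A := by
      rw [hTdef]
      simp only [← Matrix.mul_assoc]
      rw [hUU, Matrix.one_mul, Matrix.mul_assoc, hUU, Matrix.mul_one]
    have hc0 : (Fin.castLE (show 2 ≤ 3 by norm_num) (0 : Fin 2)) = (0 : Fin 3) := rfl
    have hc1 : (Fin.castLE (show 2 ≤ 3 by norm_num) (1 : Fin 2)) = (1 : Fin 3) := rfl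
    conv_rhs => rw [← hA2]
    fin_cases i <;> fin_cases j <;> simp only [Matrix.mul_apply, conjTranspose_apply] <;>
      simp [hVdef, hUdef, B0, Matrix.mul_apply, Fin.sum_univ_three, Fin.sum_univ_two,
        conjTranspose_apply, hT10, hc0, hc1] <;>
      ring1
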